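/- Let T be a rooted binary phylogenetic X-tree whose positive edge lengths satisfy the ultrametric condition, with |X| = n, and let k be a branching value of T. Then n − k + 1 ≤ m(T,k) ≤ (n/k)^k, where m(T,k) is the number of size-k maxPD sets of T. -/

import Mathlib

/-!
Rooted phylogenetic `X`-trees with positive edge lengths.

A tree on a finite vertex type `V` is encoded by its parent function: the root
has no parent, every other vertex has one, and iterating the parent function
reaches the root.  The edge into a non-root vertex `v` has length `len v`, and
`hgt v` is the distance from the root to `v`.  Leaves are the vertices with no
children; the taxon set `X` of the paper is the set `leaves` of leaves.
Every non-leaf, non-root vertex has out-degree (number of children) at least 2.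
-/

noncomputable section

attribute [local instance] Classical.propDecidable

structure PhyloTree (V : Type) [Fintype V] [DecidableEq V] where
  root : V
  parent : V → Option V
  len : V → ℝ
  hgt : V → ℝ
  parent_root : parent root = none
  parent_isSome : ∀ v, v ≠ root → (parent v).isSome
  reaches_root : ∀ v, Relation.ReflTransGen (fun a b => parent a = some b) v root
  hgt_root : hgt root = 0
  hgt_eq : ∀ v u, parent v = some u → hgt v = hgt u + len v
  len_pos : ∀ v, v ≠ root → 0 < len v
  outdeg_ge_two : ∀ v, v ≠ root → (∃ u, parent u = some v) →
    2 ≤ Set.ncard {u | parent u = some v}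

namespace PhyloTree

variable {V : Type} [Fintype V] [DecidableEq V]

/-- `T.step a b` : `b` is the parent of `a`. -/
def step (T : PhyloTree V) (a b : V) : Prop := T.parent a = some b

/-- `T.anc u v` : `u` is an ancestor of `v`, i.e. `u` lies on the (unique) path
from the root to `v` (reflexively). -/
def anc (T : PhyloTree V) (u v : V) : Prop := Relation.ReflTransGen T.step v u

/-- a leaf is a vertex with no children. -/
def IsLeaf (T : PhyloTree V) (v : V) : Prop := ∀ u, T.parent u ≠ some v

/-- the leaf set (the taxon set `X`). -/
def leaves (T : PhyloTree V) : Set V := {v | T.IsLeaf v}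

/-- Phylogenetic diversity of a set `Y`: the total length of all edges `e`
whose set of descendant leaves meets `Y` (the edge into a non-root vertex `v`
has length `T.len v`). -/
def PD (T : PhyloTree V) (Y : Set V) : ℝ :=
  ∑ v : V, if v ≠ T.root ∧ ∃ x ∈ Y, T.IsLeaf x ∧ T.anc v x then T.len v else 0

/-- the ultrametric condition: all leaves are at the same distance from the root. -/
def Ultrametric (T : PhyloTree V) : Prop :=
  ∀ x y, T.IsLeaf x → T.IsLeaf y → T.hgt x = T.hgt y

/-- `R d`: the set of vertices within distance `d` above some leaf. -/
def R (T : PhyloTree V) (d : ℝ) : Set V :=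
  {v | ∃ x, T.IsLeaf x ∧ T.anc v x ∧ T.hgt x - T.hgt v ≤ d}

/-- adjacency in the forest induced by `T` on a vertex set `S`. -/
def adjIn (T : PhyloTree V) (S : Set V) (u v : V) : Prop :=
  u ∈ S ∧ v ∈ S ∧ (T.parent u = some v ∨ T.parent v = some u)

/-- the connected components of the forest induced by `T` on `S`. -/
def components (T : PhyloTree V) (S : Set V) : Set (Set V) :=
  {C | ∃ v ∈ S, C = S ∩ {u | Relation.ReflTransGen (T.adjIn S) v u}}

/-- `c d`: the number of connected components of the forest `T[R(d)]`. -/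
def ccount (T : PhyloTree V) (d : ℝ) : ℕ := (T.components (T.R d)).ncard

/-- `k` is a branching value if `T[R(d)]` has exactly `k` components for some `d ≥ 0`. -/
def IsBranchingValue (T : PhyloTree V) (k : ℕ) : Prop := ∃ d : ℝ, 0 ≤ d ∧ T.ccount d = k

/-- the branching distance `d_k = min {d : c(d) = k}`. -/
def branchDist (T : PhyloTree V) (k : ℕ) : ℝ := sInf {d | 0 ≤ d ∧ T.ccount d = k}

/-- `k⁻`: the largest branching value `≤ k`. -/
def kminus (T : PhyloTree V) (k : ℕ) : ℕ := sSup {j | j ≤ k ∧ T.IsBranchingValue j}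

/-- `k⁺`: the smallest branching value `≥ k`. -/
def kplus (T : PhyloTree V) (k : ℕ) : ℕ := sInf {j | k ≤ j ∧ T.IsBranchingValue j}

/-- `A` is a size-`k` maxPD set. -/
def IsMaxPD (T : PhyloTree V) (k : ℕ) (A : Set V) : Prop :=
  A ⊆ T.leaves ∧ A.ncard = k ∧ ∀ Y ⊆ T.leaves, Y.ncard = k → T.PD Y ≤ T.PD A

/-- `A` is a size-`k` minPD set. -/
def IsMinPD (T : PhyloTree V) (k : ℕ) (A : Set V) : Prop :=
  A ⊆ T.leaves ∧ A.ncard = k ∧ ∀ Y ⊆ T.leaves, Y.ncard = k → T.PD A ≤ T.PD Y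

/-- `m T k`: the number of size-`k` maxPD sets of `T`. -/
def m (T : PhyloTree V) (k : ℕ) : ℕ := {A : Set V | T.IsMaxPD k A}.ncard

/-- `T` is binary: every non-leaf vertex has exactly two children. -/
def Binary (T : PhyloTree V) : Prop :=
  ∀ v, ¬ T.IsLeaf v → Set.ncard {u | T.parent u = some v} = 2

end PhyloTree
namespace PhyloTree

section Basics

variable {V : Type} [Fintype V] [DecidableEq V] (T : PhyloTree V)

lemma step_ne_root {a b : V} (h : T.step a b) : a ≠ T.root := by
  intro rfl_; subst rfl_; rw [step, T.parent_root] at h; cases h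

lemma len_nonneg_of_step {a b : V} (h : T.step a b) : 0 < T.len a :=
  T.len_pos a (T.step_ne_root h)

lemma hgt_lt_of_step {a b : V} (h : T.step a b) : T.hgt b < T.hgt a := by
  have := T.hgt_eq a b h
  have := T.len_pos a (T.step_ne_root h)
  linarith

lemma anc_refl (v : V) : T.anc v v := Relation.ReflTransGen.refl

lemma anc_trans {u v w : V} (h1 : T.anc u v) (h2 : T.anc v w) : T.anc u w :=
  Relation.ReflTransGen.trans h2 h1

lemma anc_hgt_le {u v : V} (h : T.anc u v) : T.hgt u ≤ T.hgt v := by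
  induction h with
  | refl => exact le_refl _
  | tail h1 h2 ih => exact le_trans (le_of_lt (T.hgt_lt_of_step h2)) ih

lemma anc_hgt_lt {u v : V} (h : T.anc u v) (hne : u ≠ v) : T.hgt u < T.hgt v := by
  rcases Relation.ReflTransGen.cases_head h with h' | ⟨w, hw, h2⟩
  · exact absurd h'.symm hne
  · exact lt_of_le_of_lt (T.anc_hgt_le h2) (T.hgt_lt_of_step hw)

lemma anc_antisymm {u v : V} (h1 : T.anc u v) (h2 : T.anc v u) : u = v := by
  by_contra hne
  have := T.anc_hgt_lt h1 hne
  have := T.anc_hgt_le h2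
  linarith

lemma anc_root (v : V) : T.anc T.root v := T.reaches_root v

lemma step_unique {a b b' : V} (h : T.step a b) (h' : T.step a b') : b = b' := by
  rw [step] at h h'; rw [h] at h'; exact Option.some.inj h'

lemma anc_step_ex {u v : V} (h : T.anc u v) (hne : u ≠ v) :
    ∃ p, T.step v p ∧ T.anc u p := by
  rcases Relation.ReflTransGen.cases_head h with h' | ⟨w, hw, h2⟩
  · exact absurd h'.symm hne
  · exact ⟨w, hw, h2⟩

lemma anc_comparable {u v x : V} (h1 : T.anc u x) (h2 : T.anc v x) :
    T.anc u v ∨ T.anc v u := by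
  unfold anc at h1
  induction h1 using Relation.ReflTransGen.head_induction_on with
  | refl => exact Or.inr h2
  | head hstep htail ih =>
    rename_i a c
    rcases Relation.ReflTransGen.cases_head h2 with h' | ⟨w, hw, h2'⟩
    · subst h'; exact Or.inl (Relation.ReflTransGen.head hstep htail)
    · have : c = w := T.step_unique hstep hw
      subst this
      exact ih h2'

lemma exists_leaf_desc (v : V) : ∃ x, T.IsLeaf x ∧ T.anc v x := by
  classical
  have hfin : {u | T.anc v u}.Finite := Set.toFinite _
  have hne : (hfin.toFinset).Nonempty := ⟨v, by simp [Set.Finite.mem_toFinset]; exact T.anc_refl v⟩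
  obtain ⟨x, hx, hmax⟩ := Finset.exists_max_image hfin.toFinset T.hgt hne
  rw [Set.Finite.mem_toFinset] at hx
  refine ⟨x, ?_, hx⟩
  intro u hu
  have hanc : T.anc v u := Relation.ReflTransGen.head hu hx
  have := hmax u (by rwa [Set.Finite.mem_toFinset])
  have := T.hgt_lt_of_step hu
  linarith

lemma anc_ne_root {u v : V} (h : T.anc u v) (hu : u ≠ T.root) : v ≠ T.root := by
  intro rfl_; subst rfl_
  exact hu (T.anc_antisymm h (T.anc_root u))

lemma hgt_nonneg (v : V) : 0 ≤ T.hgt v := by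
  have := T.anc_hgt_le (T.anc_root v)
  rw [T.hgt_root] at this; exact this

end Basics
end PhyloTree
namespace PhyloTree

section Telescope

variable {V : Type} [Fintype V] [DecidableEq V] (T : PhyloTree V)

/-- sum of the lengths of the edges into the vertices satisfying `Q`. -/
def wsum (Q : V → Prop) : ℝ := ∑ v : V, if Q v then T.len v else 0

lemma wsum_congr {Q Q' : V → Prop} (h : ∀ v, Q v ↔ Q' v) : T.wsum Q = T.wsum Q' :=
  Finset.sum_congr rfl (fun v _ => by rw [if_congr (h v) rfl rfl])

lemma wsum_zero {Q : V → Prop} (h : ∀ v, ¬ Q v) : T.wsum Q = 0 :=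
  Finset.sum_eq_zero (fun v _ => if_neg (h v))

lemma wsum_single (w : V) : T.wsum (fun v => v = w) = T.len w := by
  unfold wsum
  exact (Finset.sum_eq_single w (fun b _ hb => if_neg hb)
    (fun h => absurd (Finset.mem_univ w) h)).trans (if_pos rfl)

lemma wsum_eq_add {Q Q1 Q2 : V → Prop} (h : ∀ v, Q v ↔ (Q1 v ∨ Q2 v))
    (hdisj : ∀ v, Q1 v → Q2 v → False) :
    T.wsum Q = T.wsum Q1 + T.wsum Q2 := by
  unfold wsum
  rw [← Finset.sum_add_distrib]
  apply Finset.sum_congr rfl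
  intro v _
  by_cases h1 : Q1 v
  · rw [if_pos ((h v).mpr (Or.inl h1)), if_pos h1, if_neg (hdisj v h1), add_zero]
  · by_cases h2 : Q2 v
    · rw [if_pos ((h v).mpr (Or.inr h2)), if_neg h1, if_pos h2, zero_add]
    · rw [if_neg (fun hq => ((h v).mp hq).elim h1 h2), if_neg h1, if_neg h2, add_zero]

lemma wsum_mono {Q Q' : V → Prop} (h : ∀ v, Q v → Q' v)
    (hroot : ∀ v, Q' v → v ≠ T.root) : T.wsum Q ≤ T.wsum Q' := by
  apply Finset.sum_le_sum
  intro v _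
  by_cases hq : Q v
  · rw [if_pos hq, if_pos (h v hq)]
  · rw [if_neg hq]
    by_cases hq' : Q' v
    · rw [if_pos hq']
      exact le_of_lt (T.len_pos v (hroot v hq'))
    · rw [if_neg hq']

lemma wsum_le_wsum_add {Q Q1 Q2 : V → Prop} (hQ : ∀ v, Q v → Q1 v ∨ Q2 v)
    (h1 : ∀ v, Q1 v → v ≠ T.root) (h2 : ∀ v, Q2 v → v ≠ T.root) :
    T.wsum Q ≤ T.wsum Q1 + T.wsum Q2 := by
  unfold wsum
  rw [← Finset.sum_add_distrib]
  apply Finset.sum_le_sum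
  intro v _
  have e1 : (0:ℝ) ≤ if Q1 v then T.len v else 0 := by
    split
    · exact le_of_lt (T.len_pos v (h1 v (by assumption)))
    · exact le_refl 0
  have e2 : (0:ℝ) ≤ if Q2 v then T.len v else 0 := by
    split
    · exact le_of_lt (T.len_pos v (h2 v (by assumption)))
    · exact le_refl 0
  by_cases hq : Q v
  · rw [if_pos hq]
    rcases hQ v hq with h | h
    · rw [if_pos h]; linarith
    · rw [if_pos h]; linarith
  · rw [if_neg hq]; linarith

/-- `v` lies strictly between `u` (exclusive) and `w` (inclusive) on the path. -/
def between (u w v : V) : Prop := T.anc u v ∧ T.anc v w ∧ v ≠ u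

lemma between_ne_root {u w v : V} (h : T.between u w v) : v ≠ T.root := by
  rintro rfl
  exact h.2.2 (T.anc_antisymm h.1 (T.anc_root u)).symm

lemma sum_between {u w : V} (h : T.anc u w) :
    T.wsum (T.between u w) = T.hgt w - T.hgt u := by
  unfold anc at h
  induction h using Relation.ReflTransGen.head_induction_on with
  | refl =>
    rw [T.wsum_zero, sub_self]
    rintro v ⟨h1, h2, h3⟩
    exact h3 (T.anc_antisymm h1 h2).symm
  | head hstep htail ih =>
    rename_i w c
    have hcu : T.anc u c := htail
    have hwne : w ≠ u := by
      rintro rfl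
      have := T.anc_hgt_le hcu
      have := T.hgt_lt_of_step hstep
      linarith
    have key : ∀ v : V, T.between u w v ↔ (T.between u c v ∨ v = w) := by
      intro v
      constructor
      · rintro ⟨h1, h2, h3⟩
        by_cases hvw : v = w
        · exact Or.inr hvw
        · obtain ⟨p, hp, h2'⟩ := T.anc_step_ex h2 hvw
          have hpc : p = c := T.step_unique hp hstep
          subst hpc
          exact Or.inl ⟨h1, h2', h3⟩
      · rintro (⟨h1, h2, h3⟩ | rfl)
        · exact ⟨h1, Relation.ReflTransGen.head hstep h2, h3⟩
        · exact ⟨Relation.ReflTransGen.head hstep hcu, T.anc_refl v, hwne⟩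
    have hdisj : ∀ v, T.between u c v → v = w → False := by
      rintro v ⟨_, h2, _⟩ rfl
      have := T.anc_hgt_le h2
      have := T.hgt_lt_of_step hstep
      linarith
    rw [T.wsum_eq_add key hdisj, ih, T.wsum_single w]
    have := T.hgt_eq w c hstep
    linarith

/-- bound a sum of lengths over a subset of a path segment. -/
lemma sum_le_of_subset_between {u w : V} (h : T.anc u w) (Q : V → Prop)
    (hQ : ∀ v, Q v → T.between u w v) :
    T.wsum Q ≤ T.hgt w - T.hgt u := by
  rw [← T.sum_between h]
  exact T.wsum_mono hQ (fun v hv => T.between_ne_root hv)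

end Telescope
end PhyloTree
namespace PhyloTree

section Tops

variable {V : Type} [Fintype V] [DecidableEq V] (T : PhyloTree V)

/-- `t` is a top of the forest `T[R d]`: a vertex of `R d` whose parent is not in `R d`. -/
def istop (d : ℝ) (t : V) : Prop :=
  t ∈ T.R d ∧ (t = T.root ∨ ∀ p, T.step t p → p ∉ T.R d)

variable {H d : ℝ} (hH : ∀ x, T.IsLeaf x → T.hgt x = H) (hd : 0 ≤ d)

set_option linter.unusedSectionVars false

include hH hd

lemma memR_iff (v : V) : v ∈ T.R d ↔ H - d ≤ T.hgt v := by
  constructor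
  · rintro ⟨x, hx, hanc, hle⟩
    rw [hH x hx] at hle; linarith
  · intro hv
    obtain ⟨x, hx, hanc⟩ := T.exists_leaf_desc v
    exact ⟨x, hx, hanc, by rw [hH x hx]; linarith⟩

lemma leaf_mem_R {x : V} (hx : T.IsLeaf x) : x ∈ T.R d :=
  ⟨x, hx, T.anc_refl x, by linarith⟩

lemma mem_R_of_anc {t v : V} (ht : t ∈ T.R d) (h : T.anc t v) : v ∈ T.R d := by
  rw [T.memR_iff hH hd] at ht ⊢
  exact le_trans ht (T.anc_hgt_le h)

lemma exists_top {v : V} (hv : v ∈ T.R d) : ∃ t, T.istop d t ∧ T.anc t v := by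
  classical
  have hfin : {u | T.anc u v ∧ u ∈ T.R d}.Finite := Set.toFinite _
  have hne : (hfin.toFinset).Nonempty :=
    ⟨v, by rw [Set.Finite.mem_toFinset]; exact ⟨T.anc_refl v, hv⟩⟩
  obtain ⟨t, ht, hmin⟩ := Finset.exists_min_image hfin.toFinset T.hgt hne
  rw [Set.Finite.mem_toFinset] at ht
  refine ⟨t, ⟨ht.2, ?_⟩, ht.1⟩
  by_cases htr : t = T.root
  · exact Or.inl htr
  · refine Or.inr fun p hp hpR => ?_
    have hanc : T.anc p v := T.anc_trans (Relation.ReflTransGen.single hp) ht.1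
    have := hmin p (by rw [Set.Finite.mem_toFinset]; exact ⟨hanc, hpR⟩)
    have := T.hgt_lt_of_step hp
    linarith

lemma top_unique {t1 t2 v : V} (h1 : T.istop d t1) (h2 : T.istop d t2)
    (ha1 : T.anc t1 v) (ha2 : T.anc t2 v) : t1 = t2 := by
  have comp := T.anc_comparable ha1 ha2
  have key : ∀ s1 s2 : V, T.istop d s1 → T.istop d s2 → T.anc s1 s2 → s1 = s2 := by
    intro s1 s2 hs1 hs2 hanc
    by_contra hne
    obtain ⟨p, hp, hanc'⟩ := T.anc_step_ex hanc hne
    have hpR : p ∈ T.R d := by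
      have h1' := (T.memR_iff hH hd p).mpr
        (le_trans ((T.memR_iff hH hd s1).mp hs1.1) (T.anc_hgt_le hanc'))
      exact h1'
    rcases hs2.2 with hr | hnp
    · subst hr
      exact hne (T.anc_antisymm hanc (T.anc_root s1))
    · exact hnp p hp hpR
  rcases comp with h | h
  · exact key t1 t2 h1 h2 h
  · exact (key t2 t1 h2 h1 h).symm

lemma top_ne_root {t t' : V} (h : T.istop d t) (h' : T.istop d t') (hne : t ≠ t') :
    t ≠ T.root := by
  rintro rfl
  have hall : ∀ v : V, v ∈ T.R d := by
    intro v
    have hr := (T.memR_iff hH hd T.root).mp h.1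
    rw [T.hgt_root] at hr
    exact (T.memR_iff hH hd v).mpr (le_trans hr (T.hgt_nonneg v))
  apply hne
  rcases h'.2 with hr | hnp
  · exact hr.symm
  · by_contra hne2
    have hne3 : t' ≠ T.root := fun e => hne2 e.symm
    obtain ⟨p, hp⟩ := Option.isSome_iff_exists.mp (T.parent_isSome t' hne3)
    exact hnp p hp (hall p)

lemma top_parent_lt {t : V} (h : T.istop d t) (htr : t ≠ T.root) :
    ∃ p, T.step t p ∧ T.hgt p < H - d := by
  obtain ⟨p, hp⟩ := Option.isSome_iff_exists.mp (T.parent_isSome t htr)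
  refine ⟨p, hp, ?_⟩
  rcases h.2 with hr | hnp
  · exact absurd hr htr
  · have := hnp p hp
    rw [T.memR_iff hH hd] at this
    linarith [not_le.mp this]

end Tops
end PhyloTree
namespace PhyloTree

section Comps

variable {V : Type} [Fintype V] [DecidableEq V] (T : PhyloTree V)
variable {H d : ℝ} (hH : ∀ x, T.IsLeaf x → T.hgt x = H) (hd : 0 ≤ d)

set_option linter.unusedSectionVars false

include hH hd

lemma adj_symm : Symmetric (T.adjIn (T.R d)) := by
  rintro a b ⟨h1, h2, h3⟩
  exact ⟨h2, h1, h3.symm⟩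

lemma reach_of_anc {t u : V} (ht : t ∈ T.R d) (h : T.anc t u) :
    Relation.ReflTransGen (T.adjIn (T.R d)) t u := by
  unfold anc at h
  induction h using Relation.ReflTransGen.head_induction_on with
  | refl => exact Relation.ReflTransGen.refl
  | head hstep htail ih =>
    rename_i a c
    have hta : T.anc t a := Relation.ReflTransGen.head hstep htail
    have haS : a ∈ T.R d := T.mem_R_of_anc hH hd ht hta
    have hcS : c ∈ T.R d := T.mem_R_of_anc hH hd ht htail
    exact Relation.ReflTransGen.tail ih ⟨hcS, haS, Or.inr hstep⟩

lemma anc_of_reach {t u : V} (ht : T.istop d t)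
    (h : Relation.ReflTransGen (T.adjIn (T.R d)) t u) : T.anc t u := by
  induction h with
  | refl => exact T.anc_refl t
  | tail h1 hadj ih =>
    rename_i b c
    rcases hadj.2.2 with hbc | hcb
    · -- parent b = some c : c is the parent of b
      have hcb' : T.anc c b := Relation.ReflTransGen.single (show T.step b c from hbc)
      rcases T.anc_comparable ih hcb' with h' | h'
      · exact h'
      · -- c is an ancestor of t
        by_cases hct : c = t
        · subst hct; exact T.anc_refl c
        · exfalso
          obtain ⟨p, hp, hanc'⟩ := T.anc_step_ex h' hct
          have hpR : p ∈ T.R d := T.mem_R_of_anc hH hd hadj.2.1 hanc'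
          rcases ht.2 with hr | hnp
          · subst hr
            exact hct (T.anc_antisymm h' (T.anc_root c))
          · exact hnp p hp hpR
    · -- parent c = some b : c is a child of b
      exact T.anc_trans ih (Relation.ReflTransGen.single (show T.step c b from hcb))

lemma comp_top_eq {t : V} (ht : T.istop d t) :
    T.R d ∩ {u | Relation.ReflTransGen (T.adjIn (T.R d)) t u}
      = T.R d ∩ {u | T.anc t u} := by
  ext u
  constructor
  · rintro ⟨h1, h2⟩
    exact ⟨h1, T.anc_of_reach hH hd ht h2⟩
  · rintro ⟨h1, h2⟩
    exact ⟨h1, T.reach_of_anc hH hd ht.1 h2⟩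

lemma components_eq :
    T.components (T.R d) = (fun t => T.R d ∩ {u | T.anc t u}) '' {t | T.istop d t} := by
  ext C
  constructor
  · rintro ⟨v, hv, rfl⟩
    obtain ⟨t, ht, hanc⟩ := T.exists_top hH hd hv
    refine ⟨t, ht, ?_⟩
    show T.R d ∩ {u | T.anc t u} = _
    rw [← T.comp_top_eq hH hd ht]
    have hreach : Relation.ReflTransGen (T.adjIn (T.R d)) t v :=
      T.reach_of_anc hH hd ht.1 hanc
    ext u
    simp only [Set.mem_inter_iff, Set.mem_setOf_eq]
    constructor
    · rintro ⟨h1, h2⟩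
      exact ⟨h1, Relation.ReflTransGen.trans
        (by haveI : Std.Symm (T.adjIn (T.R d)) := ⟨fun a b h => T.adj_symm hH hd h⟩; exact Std.Symm.symm _ _ hreach) h2⟩
    · rintro ⟨h1, h2⟩
      exact ⟨h1, Relation.ReflTransGen.trans hreach h2⟩
  · rintro ⟨t, ht, rfl⟩
    refine ⟨t, ht.1, ?_⟩
    show T.R d ∩ {u | T.anc t u}
      = T.R d ∩ {u | Relation.ReflTransGen (T.adjIn (T.R d)) t u}
    exact (T.comp_top_eq hH hd ht).symm

lemma ccount_eq_tops : T.ccount d = {t | T.istop d t}.ncard := by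
  rw [ccount, T.components_eq hH hd]
  apply Set.ncard_image_of_injOn
  intro t1 h1 t2 h2 heq
  have heq' : T.R d ∩ {u | T.anc t1 u} = T.R d ∩ {u | T.anc t2 u} := heq
  have m1 : t1 ∈ T.R d ∩ {u | T.anc t2 u} := by
    rw [← heq']; exact ⟨h1.1, T.anc_refl t1⟩
  have m2 : t2 ∈ T.R d ∩ {u | T.anc t1 u} := by
    rw [heq']; exact ⟨h2.1, T.anc_refl t2⟩
  exact T.anc_antisymm m2.2 m1.2

end Comps
end PhyloTree
namespace PhyloTree

section Exchange

variable {V : Type} [Fintype V] [DecidableEq V] (T : PhyloTree V)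

/-- `v` is covered by `Y`. -/
def cov (Y : Set V) (v : V) : Prop := ∃ x ∈ Y, T.IsLeaf x ∧ T.anc v x

lemma PD_def (Y : Set V) :
    T.PD Y = T.wsum (fun v => v ≠ T.root ∧ T.cov Y v) := by
  unfold PD cov wsum
  exact Finset.sum_congr rfl (fun v _ => by congr 1)

lemma cov_mono {Y Z : Set V} (h : Y ⊆ Z) {v : V} (hc : T.cov Y v) : T.cov Z v := by
  obtain ⟨x, hx, h1, h2⟩ := hc
  exact ⟨x, h hx, h1, h2⟩

variable {H d : ℝ} (hH : ∀ x, T.IsLeaf x → T.hgt x = H) (hd : 0 ≤ d)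

set_option linter.unusedSectionVars false

include hH hd

lemma exchange {A : Set V} (hA : A ⊆ T.leaves)
    {t0 t1 : V} (ht0 : T.istop d t0) (ht1 : T.istop d t1) (hne : t0 ≠ t1)
    (hempty : ∀ x, x ∈ A → ¬ T.anc t0 x)
    {a a' : V} (ha : a ∈ A) (ha' : a' ∈ A) (haa' : a ≠ a')
    (hta : T.anc t1 a) (hta' : T.anc t1 a') :
    ∃ x, T.IsLeaf x ∧ T.anc t0 x ∧ x ∉ A ∧
      T.PD A < T.PD (insert x (A \ {a'})) := by
  classical
  obtain ⟨x, hxleaf, hxanc⟩ := T.exists_leaf_desc t0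
  have hxA : x ∉ A := fun h => hempty x h hxanc
  set A' := A \ {a'} with hA'def
  refine ⟨x, hxleaf, hxanc, hxA, ?_⟩
  have haA' : a ∈ A' := ⟨ha, haa'⟩
  have haleaf : T.IsLeaf a := hA ha
  have ht0r : t0 ≠ T.root := T.top_ne_root hH hd ht0 ht1 hne
  -- the loss term
  have hL_le : T.wsum (fun v => v ≠ T.root ∧ T.cov A v ∧ ¬ T.cov A' v) ≤ d := by
    have hsub : ∀ v, (v ≠ T.root ∧ T.cov A v ∧ ¬ T.cov A' v) → T.between t1 a' v := by
      rintro v ⟨hvr, hcA, hcA'⟩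
      obtain ⟨b, hb, hbl, hvb⟩ := hcA
      have hba' : b = a' := by
        by_contra hbn
        exact hcA' ⟨b, ⟨hb, hbn⟩, hbl, hvb⟩
      subst hba'
      have hva : ¬ T.anc v a := fun h => hcA' ⟨a, haA', haleaf, h⟩
      have hcmp := T.anc_comparable hvb hta'
      have h1 : T.anc t1 v := by
        rcases hcmp with h | h
        · exact absurd (T.anc_trans h hta) hva
        · exact h
      refine ⟨h1, hvb, ?_⟩
      rintro rfl
      exact hva hta
    have hle := T.sum_le_of_subset_between hta' _ hsub
    have h1 : H - d ≤ T.hgt t1 := (T.memR_iff hH hd t1).mp ht1.1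
    rw [hH a' (hA ha')] at hle
    linarith
  -- PD A ≤ PD A' + loss
  have hPD1 : T.PD A ≤ T.PD A'
      + T.wsum (fun v => v ≠ T.root ∧ T.cov A v ∧ ¬ T.cov A' v) := by
    rw [PD_def, PD_def]
    apply T.wsum_le_wsum_add
    · rintro v ⟨hvr, hcA⟩
      by_cases hcA' : T.cov A' v
      · exact Or.inl ⟨hvr, hcA'⟩
      · exact Or.inr ⟨hvr, hcA, hcA'⟩
    · exact fun v hv => hv.1
    · exact fun v hv => hv.1
  -- the gain term
  have hG_eq : T.wsum (fun v => v ≠ T.root ∧ T.anc t0 v ∧ T.anc v x)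
      = (H - T.hgt t0) + T.len t0 := by
    have key : ∀ v : V, (v ≠ T.root ∧ T.anc t0 v ∧ T.anc v x)
        ↔ (T.between t0 x v ∨ v = t0) := by
      intro v
      constructor
      · rintro ⟨hvr, h1, h2⟩
        by_cases hvt : v = t0
        · exact Or.inr hvt
        · exact Or.inl ⟨h1, h2, hvt⟩
      · rintro (hb | rfl)
        · exact ⟨T.between_ne_root hb, hb.1, hb.2.1⟩
        · exact ⟨ht0r, T.anc_refl v, hxanc⟩
    have hdisj : ∀ v, T.between t0 x v → v = t0 → False := by
      rintro v ⟨_, _, h3⟩ rfl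
      exact h3 rfl
    rw [T.wsum_eq_add key hdisj, T.sum_between hxanc, T.wsum_single t0, hH x hxleaf]
  have hG_gt : d < T.wsum (fun v => v ≠ T.root ∧ T.anc t0 v ∧ T.anc v x) := by
    obtain ⟨p, hp, hplt⟩ := T.top_parent_lt hH hd ht0 ht0r
    have := T.hgt_eq t0 p hp
    rw [hG_eq]
    linarith
  -- PD A' + gain ≤ PD (insert x A')
  have hPD2 : T.PD A' + T.wsum (fun v => v ≠ T.root ∧ T.anc t0 v ∧ T.anc v x)
      ≤ T.PD (insert x A') := by
    rw [PD_def, PD_def]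
    have e := T.wsum_eq_add (Q := fun v => (v ≠ T.root ∧ T.cov A' v)
        ∨ (v ≠ T.root ∧ T.anc t0 v ∧ T.anc v x))
      (Q1 := fun v => v ≠ T.root ∧ T.cov A' v)
      (Q2 := fun v => v ≠ T.root ∧ T.anc t0 v ∧ T.anc v x)
      (fun v => Iff.rfl)
      (by
        rintro v ⟨hvr, b, hb, hbl, hvb⟩ ⟨_, hg1, hg2⟩
        exact hempty b hb.1 (T.anc_trans hg1 hvb))
    rw [← e]
    apply T.wsum_mono
    · rintro v (⟨hvr, hc⟩ | ⟨hvr, hg1, hg2⟩)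
      · exact ⟨hvr, T.cov_mono (Set.subset_insert x A') hc⟩
      · exact ⟨hvr, x, Set.mem_insert x A', hxleaf, hg2⟩
    · exact fun v hv => hv.1
  linarith

end Exchange
end PhyloTree
namespace PhyloTree

section Trav

variable {V : Type} [Fintype V] [DecidableEq V] (T : PhyloTree V)

/-- `A` is a transversal of the components of `T[R d]`: it consists of leaves and
contains exactly one leaf below each top. -/
def trav (d : ℝ) (A : Set V) : Prop :=
  A ⊆ T.leaves ∧ ∀ t, T.istop d t → ∃! a, a ∈ A ∧ T.anc t a

lemma wsum_biUnion (s : Finset V) (P : V → V → Prop)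
    (huniq : ∀ v a b, a ∈ s → b ∈ s → P a v → P b v → a = b) :
    T.wsum (fun v => ∃ a ∈ s, P a v) = ∑ a ∈ s, T.wsum (P a) := by
  classical
  induction s using Finset.induction_on with
  | empty => simpa using T.wsum_zero (Q := fun v => ∃ a ∈ (∅ : Finset V), P a v) (by simp)
  | insert a s ha ih =>
    rw [Finset.sum_insert ha]
    rw [← ih (fun v b c hb hc => huniq v b c (Finset.mem_insert_of_mem hb)
      (Finset.mem_insert_of_mem hc))]
    rw [← T.wsum_eq_add (Q := fun v => ∃ b ∈ insert a s, P b v)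
      (Q1 := P a) (Q2 := fun v => ∃ b ∈ s, P b v) ?_ ?_]
    · intro v
      constructor
      · rintro ⟨b, hb, hPb⟩
        rcases Finset.mem_insert.mp hb with rfl | hb'
        · exact Or.inl hPb
        · exact Or.inr ⟨b, hb', hPb⟩
      · rintro (h | ⟨b, hb, hPb⟩)
        · exact ⟨a, Finset.mem_insert_self a s, h⟩
        · exact ⟨b, Finset.mem_insert_of_mem hb, hPb⟩
    · rintro v hPa ⟨b, hb, hPb⟩
      have : a = b := huniq v a b (Finset.mem_insert_self a s)
        (Finset.mem_insert_of_mem hb) hPa hPb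
      subst this
      exact ha hb

variable {H d : ℝ} (hH : ∀ x, T.IsLeaf x → T.hgt x = H) (hd : 0 ≤ d)

set_option linter.unusedSectionVars false

include hH hd

/-- the part of the PD sum coming from edges above the cut is independent of the set. -/
lemma PD_trav_eq {A : Set V} (htrav : T.trav d A) :
    T.PD A = T.wsum (fun v => v ≠ T.root ∧ v ∉ T.R d ∧ ∃ t, T.istop d t ∧ T.anc v t)
      + ∑ t ∈ (Set.toFinite {t | T.istop d t}).toFinset,
          (H - T.hgt t + (if t = T.root then 0 else T.len t)) := by
  classical
  set topsF := (Set.toFinite {t | T.istop d t}).toFinset with htopsF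
  have hmemF : ∀ t, t ∈ topsF ↔ T.istop d t := by
    intro t; rw [htopsF, Set.Finite.mem_toFinset]; rfl
  -- choose the representatives
  have hrep : ∀ t, T.istop d t → ∃ a, (a ∈ A ∧ T.anc t a) ∧
      ∀ b, (b ∈ A ∧ T.anc t b) → b = a := fun t ht => htrav.2 t ht
  choose! rep hrep1 hrep2 using hrep
  -- the inner (below-cut) indexed predicate
  set P : V → V → Prop := fun t v => v ≠ T.root ∧ T.anc t v ∧ T.anc v (rep t) with hP
  have hsplit : ∀ v, (v ≠ T.root ∧ T.cov A v) ↔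
      ((v ≠ T.root ∧ v ∉ T.R d ∧ ∃ t, T.istop d t ∧ T.anc v t) ∨
        (∃ t ∈ topsF, P t v)) := by
    intro v
    constructor
    · rintro ⟨hvr, b, hb, hbl, hvb⟩
      by_cases hvR : v ∈ T.R d
      · obtain ⟨t, ht, htv⟩ := T.exists_top hH hd hvR
        have htb : T.anc t b := T.anc_trans htv hvb
        have hbrep : b = rep t := hrep2 t ht b ⟨hb, htb⟩
        exact Or.inr ⟨t, (hmemF t).mpr ht, hvr, htv, hbrep ▸ hvb⟩
      · refine Or.inl ⟨hvr, hvR, ?_⟩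
        obtain ⟨t, ht, htb⟩ := T.exists_top hH hd (T.leaf_mem_R hH hd hbl)
        have hcmp := T.anc_comparable hvb htb
        rcases hcmp with h | h
        · exact ⟨t, ht, h⟩
        · exact absurd (T.mem_R_of_anc hH hd ht.1 h) hvR
    · rintro (⟨hvr, hvR, t, ht, hvt⟩ | ⟨t, htF, hvr, htv, hvrep⟩)
      · have ht' := (hrep1 t ht).1
        exact ⟨hvr, rep t, ht', htrav.1 ht', T.anc_trans hvt (hrep1 t ht).2⟩
      · have ht := (hmemF t).mp htF
        have ht' := (hrep1 t ht).1
        exact ⟨hvr, rep t, ht', htrav.1 ht', hvrep⟩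
  have hdisj : ∀ v, (v ≠ T.root ∧ v ∉ T.R d ∧ ∃ t, T.istop d t ∧ T.anc v t) →
      (∃ t ∈ topsF, P t v) → False := by
    rintro v ⟨_, hvR, _⟩ ⟨t, htF, _, htv, _⟩
    exact hvR (T.mem_R_of_anc hH hd ((hmemF t).mp htF).1 htv)
  rw [PD_def, T.wsum_eq_add hsplit hdisj]
  congr 1
  rw [T.wsum_biUnion topsF P (fun v a b haF hbF hPa hPb =>
    T.top_unique hH hd ((hmemF a).mp haF) ((hmemF b).mp hbF) hPa.2.1 hPb.2.1)]
  apply Finset.sum_congr rfl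
  intro t htF
  have ht := (hmemF t).mp htF
  have hrepA := (hrep1 t ht).1
  have hrepanc := (hrep1 t ht).2
  have hrepleaf : T.IsLeaf (rep t) := htrav.1 hrepA
  have hrephgt : T.hgt (rep t) = H := hH _ hrepleaf
  by_cases htr : t = T.root
  · subst htr
    have hiff : ∀ v, P T.root v ↔ T.between T.root (rep T.root) v := by
      intro v
      constructor
      · rintro ⟨hvr, _, hvrep⟩
        exact ⟨T.anc_root v, hvrep, hvr⟩
      · rintro ⟨h1, h2, h3⟩
        exact ⟨h3, h1, h2⟩
    rw [T.wsum_congr hiff, T.sum_between hrepanc, if_pos rfl, T.hgt_root, hrephgt]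
    ring
  · have hiff : ∀ v, P t v ↔ (T.between t (rep t) v ∨ v = t) := by
      intro v
      constructor
      · rintro ⟨hvr, htv, hvrep⟩
        by_cases hvt : v = t
        · exact Or.inr hvt
        · exact Or.inl ⟨htv, hvrep, hvt⟩
      · rintro (⟨h1, h2, h3⟩ | rfl)
        · exact ⟨T.between_ne_root ⟨h1, h2, h3⟩, h1, h2⟩
        · exact ⟨htr, T.anc_refl v, hrepanc⟩
    have hdisj2 : ∀ v, T.between t (rep t) v → v = t → False := by
      rintro v ⟨_, _, h3⟩ rfl
      exact h3 rfl
    rw [T.wsum_eq_add hiff hdisj2, T.sum_between hrepanc, T.wsum_single t,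
      if_neg htr, hrephgt]

end Trav
end PhyloTree
namespace PhyloTree

section MaxChar

variable {V : Type} [Fintype V] [DecidableEq V] (T : PhyloTree V)
variable {H d : ℝ} (hH : ∀ x, T.IsLeaf x → T.hgt x = H) (hd : 0 ≤ d)

set_option linter.unusedSectionVars false

include hH hd

lemma leaf_top : ∀ x, T.IsLeaf x → ∃ t, T.istop d t ∧ T.anc t x :=
  fun x hx => T.exists_top hH hd (T.leaf_mem_R hH hd hx)

lemma trav_ncard {A : Set V} (htrav : T.trav d A) :
    A.ncard = {t | T.istop d t}.ncard := by
  classical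
  choose! topf htopf using T.leaf_top hH hd
  have hinj : Set.InjOn topf A := by
    intro a ha b hb heq
    have hat := htopf a (htrav.1 ha)
    have hbt := htopf b (htrav.1 hb)
    obtain ⟨c, hc, huniq⟩ := htrav.2 (topf a) hat.1
    rw [huniq a ⟨ha, hat.2⟩, huniq b ⟨hb, heq ▸ hbt.2⟩]
  have himg : topf '' A = {t | T.istop d t} := by
    apply Set.eq_of_subset_of_subset
    · rintro t ⟨a, ha, rfl⟩
      exact (htopf a (htrav.1 ha)).1
    · rintro t ht
      obtain ⟨a, ⟨haA, hta⟩, _⟩ := htrav.2 t ht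
      have hat := htopf a (htrav.1 haA)
      exact ⟨a, haA, T.top_unique hH hd hat.1 ht hat.2 hta⟩
  rw [← himg, Set.ncard_image_of_injOn hinj]

lemma exists_trav : ∃ A, T.trav d A := by
  classical
  have h : ∀ t : V, ∃ x, T.IsLeaf x ∧ T.anc t x := T.exists_leaf_desc
  choose f hf1 hf2 using h
  refine ⟨f '' {t | T.istop d t}, ?_, ?_⟩
  · rintro a ⟨t, _, rfl⟩
    exact hf1 t
  · intro t ht
    refine ⟨f t, ⟨⟨t, ht, rfl⟩, hf2 t⟩, ?_⟩
    rintro b ⟨⟨t', ht', rfl⟩, htb⟩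
    have : t' = t := T.top_unique hH hd ht' ht (hf2 t') htb
    rw [this]

lemma maxPD_is_trav {k : ℕ} (hk1 : 1 ≤ k) (hkc : {t | T.istop d t}.ncard = k)
    {A : Set V} (hmax : T.IsMaxPD k A) : T.trav d A := by
  classical
  by_contra hnt
  choose! topf htopf using T.leaf_top hH hd
  obtain ⟨hAl, hAc, hopt⟩ := hmax
  rw [trav] at hnt
  push_neg at hnt
  obtain ⟨ts, hts, htsbad⟩ := hnt hAl
  set AF := (Set.toFinite A).toFinset with hAF
  set topsF := (Set.toFinite {t | T.istop d t}).toFinset with htopsF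
  have hmemF : ∀ t, t ∈ topsF ↔ T.istop d t := fun t => Set.Finite.mem_toFinset _
  have hmemA : ∀ a, a ∈ AF ↔ a ∈ A := fun a => Set.Finite.mem_toFinset _
  set fib : V → Finset V := fun t => AF.filter (fun a => topf a = t) with hfib
  have hfibmem : ∀ t, T.istop d t → ∀ a, (a ∈ fib t ↔ a ∈ A ∧ T.anc t a) := by
    intro t ht a
    rw [hfib]
    simp only [Finset.mem_filter, hmemA]
    constructor
    · rintro ⟨ha, rfl⟩
      exact ⟨ha, (htopf a (hAl ha)).2⟩
    · rintro ⟨ha, hta⟩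
      exact ⟨ha, T.top_unique hH hd (htopf a (hAl ha)).1 ht (htopf a (hAl ha)).2 hta⟩
  have hsum : ∑ t ∈ topsF, (fib t).card = k := by
    rw [hfib, ← Finset.card_eq_sum_card_fiberwise (fun a ha => by
      rw [Finset.mem_coe, hmemF]; exact (htopf a (hAl ((hmemA a).mp ha))).1)]
    rw [← hAc, Set.ncard_eq_toFinset_card A (Set.toFinite A)]
  have hcardtopsF : topsF.card = k := by
    rw [← hkc, Set.ncard_eq_toFinset_card _ (Set.toFinite _)]
  have htsF : ts ∈ topsF := (hmemF ts).mpr hts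
  have htsbad' : (fib ts).card ≠ 1 := by
    intro h1
    obtain ⟨b, hb⟩ := Finset.card_eq_one.mp h1
    refine htsbad ⟨b, ?_, ?_⟩
    · have : b ∈ fib ts := hb ▸ Finset.mem_singleton_self b
      exact (hfibmem ts hts b).mp this
    · intro c hc
      have : c ∈ fib ts := (hfibmem ts hts c).mpr hc
      rw [hb, Finset.mem_singleton] at this
      exact this
  -- find an empty fiber t0 and a fiber t1 with at least two elements
  have hpair : ∃ t0 ∈ topsF, ∃ t1 ∈ topsF, (fib t0).card = 0 ∧ 2 ≤ (fib t1).card := by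
    rcases Nat.lt_or_ge (fib ts).card 1 with h0 | h1
    · -- empty fiber at ts; find a big one
      have h0' : (fib ts).card = 0 := Nat.lt_one_iff.mp h0
      by_contra hno
      push_neg at hno
      have hall : ∀ t ∈ topsF, (fib t).card ≤ 1 := by
        intro t htF
        have := hno ts htsF t htF h0'
        omega
      have : ∑ t ∈ topsF, (fib t).card < ∑ t ∈ topsF, 1 :=
        Finset.sum_lt_sum hall ⟨ts, htsF, by omega⟩
      rw [hsum, Finset.sum_const, smul_eq_mul, mul_one, hcardtopsF] at this
      omega
    · have h2 : 2 ≤ (fib ts).card := by omega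
      by_contra hno
      push_neg at hno
      have hall : ∀ t ∈ topsF, 1 ≤ (fib t).card := by
        intro t htF
        have := hno t htF ts htsF
        omega
      have : ∑ t ∈ topsF, 1 < ∑ t ∈ topsF, (fib t).card :=
        Finset.sum_lt_sum hall ⟨ts, htsF, by omega⟩
      rw [hsum, Finset.sum_const, smul_eq_mul, mul_one, hcardtopsF] at this
      omega
  obtain ⟨t0, ht0F, t1, ht1F, h0, h2⟩ := hpair
  have ht0 := (hmemF t0).mp ht0F
  have ht1 := (hmemF t1).mp ht1F
  have hne : t0 ≠ t1 := by
    rintro rfl; omega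
  obtain ⟨a, haf, a', haf', hne'⟩ := Finset.one_lt_card.mp (by omega : 1 < (fib t1).card)
  have ha := (hfibmem t1 ht1 a).mp haf
  have ha' := (hfibmem t1 ht1 a').mp haf'
  have hempty : ∀ x, x ∈ A → ¬ T.anc t0 x := by
    intro x hx hanc
    have : x ∈ fib t0 := (hfibmem t0 ht0 x).mpr ⟨hx, hanc⟩
    rw [Finset.card_eq_zero.mp h0] at this
    exact absurd this (Finset.notMem_empty x)
  obtain ⟨x, hxleaf, hxanc, hxA, hlt⟩ :=
    T.exchange hH hd hAl ht0 ht1 hne hempty ha.1 ha'.1 hne' ha.2 ha'.2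
  have hYl : insert x (A \ {a'}) ⊆ T.leaves := by
    rintro y hy
    rcases Set.mem_insert_iff.mp hy with rfl | hy'
    · exact hxleaf
    · exact hAl hy'.1
  have hYc : (insert x (A \ {a'})).ncard = k := by
    have hd1 : (A \ {a'}).ncard = k - 1 := by
      rw [Set.ncard_diff_singleton_of_mem ha'.1, hAc]
    have hxn : x ∉ A \ {a'} := fun h => hxA h.1
    rw [Set.ncard_insert_of_notMem hxn (Set.Finite.diff (Set.toFinite A)), hd1]
    omega
  exact absurd (hopt _ hYl hYc) (not_le.mpr hlt)

lemma maxPD_eq_trav {k : ℕ} (hk1 : 1 ≤ k) (hkc : {t | T.istop d t}.ncard = k) :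
    {A : Set V | T.IsMaxPD k A} = {A : Set V | T.trav d A} := by
  classical
  -- a maximiser of PD over all size-k subsets of the leaves exists
  obtain ⟨A0, hA0⟩ := T.exists_trav hH hd
  have hA0c : A0.ncard = k := by rw [T.trav_ncard hH hd hA0, hkc]
  set SS : Set (Set V) := {Y | Y ⊆ T.leaves ∧ Y.ncard = k} with hSS
  have hSSfin : SS.Finite := Set.toFinite _
  have hSSne : (hSSfin.toFinset).Nonempty :=
    ⟨A0, by rw [Set.Finite.mem_toFinset]; exact ⟨hA0.1, hA0c⟩⟩
  obtain ⟨M, hM, hMmax⟩ := Finset.exists_max_image hSSfin.toFinset T.PD hSSne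
  rw [Set.Finite.mem_toFinset] at hM
  have hMismax : T.IsMaxPD k M := by
    refine ⟨hM.1, hM.2, ?_⟩
    intro Y hY1 hY2
    exact hMmax Y (by rw [Set.Finite.mem_toFinset]; exact ⟨hY1, hY2⟩)
  have hMtrav : T.trav d M := T.maxPD_is_trav hH hd hk1 hkc hMismax
  apply Set.eq_of_subset_of_subset
  · intro A hA
    exact T.maxPD_is_trav hH hd hk1 hkc hA
  · intro A hA
    refine ⟨hA.1, by rw [T.trav_ncard hH hd hA, hkc], ?_⟩
    intro Y hY1 hY2
    have : T.PD A = T.PD M := by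
      rw [T.PD_trav_eq hH hd hA, T.PD_trav_eq hH hd hMtrav]
    rw [this]
    exact hMmax Y (by rw [Set.Finite.mem_toFinset]; exact ⟨hY1, hY2⟩)

end MaxChar
end PhyloTree
namespace PhyloTree

section Count

variable {V : Type} [Fintype V] [DecidableEq V] (T : PhyloTree V)
variable {H d : ℝ} (hH : ∀ x, T.IsLeaf x → T.hgt x = H) (hd : 0 ≤ d)

set_option linter.unusedSectionVars false

include hH hd

lemma trav_count :
    {A : Set V | T.trav d A}.ncard
      = ∏ t ∈ (Set.toFinite {t | T.istop d t}).toFinset,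
          {x | T.IsLeaf x ∧ T.anc t x}.ncard := by
  classical
  set topsF := (Set.toFinite {t | T.istop d t}).toFinset with htopsF
  have hmemF : ∀ t, t ∈ topsF ↔ T.istop d t := fun t => Set.Finite.mem_toFinset _
  set B : V → Set V := fun t => {x | T.IsLeaf x ∧ T.anc t x} with hB
  -- an equivalence between transversals and choice functions
  have E : {A : Set V // T.trav d A} ≃ (∀ t : {x // x ∈ topsF}, B t.1) := by
    refine
      { toFun := fun A t =>
          ⟨(A.2.2 t.1 ((hmemF t.1).mp t.2)).exists.choose,
            A.2.1 (A.2.2 t.1 ((hmemF t.1).mp t.2)).exists.choose_spec.1,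
            (A.2.2 t.1 ((hmemF t.1).mp t.2)).exists.choose_spec.2⟩
        invFun := fun f =>
          ⟨{a | ∃ t : {x // x ∈ topsF}, a = (f t).1}, ?_, ?_⟩
        left_inv := ?_
        right_inv := ?_ }
    · rintro a ⟨t, rfl⟩
      exact (f t).2.1
    · intro t ht
      have htF : t ∈ topsF := (hmemF t).mpr ht
      refine ⟨(f ⟨t, htF⟩).1, ⟨⟨⟨t, htF⟩, rfl⟩, (f ⟨t, htF⟩).2.2⟩, ?_⟩
      rintro b ⟨⟨t', rfl⟩, htb⟩
      have ht' := (hmemF t'.1).mp t'.2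
      have : t'.1 = t := T.top_unique hH hd ht' ht (f t').2.2 htb
      have ht'eq : t' = ⟨t, htF⟩ := Subtype.ext this
      rw [ht'eq]
    · -- left inverse
      rintro ⟨A, hA⟩
      apply Subtype.ext
      simp only
      apply Set.eq_of_subset_of_subset
      · rintro a ⟨t, rfl⟩
        exact ((hA.2 t.1 ((hmemF t.1).mp t.2)).exists.choose_spec).1
      · intro a haA
        have haleaf : T.IsLeaf a := hA.1 haA
        obtain ⟨t, ht, hta⟩ := T.leaf_top hH hd a haleaf
        have htF : t ∈ topsF := (hmemF t).mpr ht
        refine ⟨⟨t, htF⟩, ?_⟩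
        have hEU := hA.2 t ht
        have h1 := hEU.exists.choose_spec
        exact (hEU.unique ⟨haA, hta⟩ h1 : a = _)
    · -- right inverse
      intro f
      funext t
      apply Subtype.ext
      simp only
      set Sf : Set V := {a | ∃ t : {x // x ∈ topsF}, a = (f t).1} with hSf
      have htrav : T.trav d Sf := by
        constructor
        · rintro a ⟨t', rfl⟩
          exact (f t').2.1
        · intro s hs
          have hsF : s ∈ topsF := (hmemF s).mpr hs
          refine ⟨(f ⟨s, hsF⟩).1, ⟨⟨⟨s, hsF⟩, rfl⟩, (f ⟨s, hsF⟩).2.2⟩, ?_⟩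
          rintro b ⟨⟨t', rfl⟩, htb⟩
          have ht' := (hmemF t'.1).mp t'.2
          have : t'.1 = s := T.top_unique hH hd ht' hs (f t').2.2 htb
          have ht'eq : t' = ⟨s, hsF⟩ := Subtype.ext this
          rw [ht'eq]
      have ht := (hmemF t.1).mp t.2
      have hEU := htrav.2 t.1 ht
      have h1 := hEU.exists.choose_spec
      have h2 : (f t).1 ∈ Sf ∧ T.anc t.1 (f t).1 := ⟨⟨t, rfl⟩, (f t).2.2⟩
      exact (hEU.unique h1 h2)
  rw [← Nat.card_coe_set_eq]
  have hc1 : Nat.card {A : Set V // T.trav d A}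
      = Nat.card (∀ t : {x // x ∈ topsF}, B t.1) := Nat.card_eq_of_bijective E E.bijective
  have hc2 : Nat.card (∀ t : {x // x ∈ topsF}, B t.1)
      = ∏ t : {x // x ∈ topsF}, Nat.card (B t.1) := Nat.card_pi
  have hc3 : ∏ t : {x // x ∈ topsF}, Nat.card (B t.1)
      = ∏ t ∈ topsF, Nat.card (B t) := Finset.prod_coe_sort topsF (fun t => Nat.card (B t))
  have hc4 : ∀ t, Nat.card (B t) = (B t).ncard := fun t => Nat.card_coe_set_eq (B t)
  rw [show Nat.card {A : Set V | T.trav d A} = Nat.card {A : Set V // T.trav d A} from rfl,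
    hc1, hc2, hc3]
  exact Finset.prod_congr rfl (fun t _ => hc4 t)

lemma blocks_sum :
    ∑ t ∈ (Set.toFinite {t | T.istop d t}).toFinset, {x | T.IsLeaf x ∧ T.anc t x}.ncard
      = T.leaves.ncard := by
  classical
  choose! topf htopf using T.leaf_top hH hd
  set topsF := (Set.toFinite {t | T.istop d t}).toFinset with htopsF
  have hmemF : ∀ t, t ∈ topsF ↔ T.istop d t := fun t => Set.Finite.mem_toFinset _
  set LF := (Set.toFinite T.leaves).toFinset with hLF
  have hmemL : ∀ a, a ∈ LF ↔ T.IsLeaf a := fun a => Set.Finite.mem_toFinset _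
  have hfw : ∀ a ∈ LF, topf a ∈ topsF := by
    intro a ha
    rw [hmemF]
    exact (htopf a ((hmemL a).mp ha)).1
  rw [show T.leaves.ncard = LF.card from Set.ncard_eq_toFinset_card _ _,
    Finset.card_eq_sum_card_fiberwise hfw]
  apply Finset.sum_congr rfl
  intro t htF
  have ht := (hmemF t).mp htF
  rw [Set.ncard_eq_toFinset_card _ (Set.toFinite _)]
  congr 1
  apply Finset.ext
  intro a
  rw [Set.Finite.mem_toFinset, Finset.mem_filter, hmemL]
  constructor
  · rintro ⟨h1, h2⟩
    exact ⟨h1, T.top_unique hH hd (htopf a h1).1 ht (htopf a h1).2 h2⟩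
  · rintro ⟨h1, rfl⟩
    exact ⟨h1, (htopf a h1).2⟩

lemma blocks_pos :
    ∀ t ∈ (Set.toFinite {t | T.istop d t}).toFinset,
      1 ≤ {x | T.IsLeaf x ∧ T.anc t x}.ncard := by
  intro t _
  obtain ⟨x, hx1, hx2⟩ := T.exists_leaf_desc t
  exact Nat.one_le_iff_ne_zero.mpr (by
    rw [← Nat.pos_iff_ne_zero] at *
    exact (Set.ncard_pos (Set.toFinite _)).mpr ⟨x, hx1, hx2⟩)

end Count
end PhyloTree
section Numeric

lemma nat_prod_lower {ι : Type*} (s : Finset ι) (f : ι → ℕ)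
    (hf : ∀ i ∈ s, 1 ≤ f i) :
    ∑ i ∈ s, f i + 1 ≤ ∏ i ∈ s, f i + s.card := by
  classical
  induction s using Finset.induction_on with
  | empty => simp
  | insert a s ha ih =>
    have hfa : 1 ≤ f a := hf a (Finset.mem_insert_self a s)
    have ih' := ih (fun i hi => hf i (Finset.mem_insert_of_mem hi))
    have hprod : 1 ≤ ∏ i ∈ s, f i :=
      Finset.one_le_prod' (fun i hi => hf i (Finset.mem_insert_of_mem hi))
    rw [Finset.sum_insert ha, Finset.prod_insert ha, Finset.card_insert_of_notMem ha]
    have key : ∏ i ∈ s, f i + f a ≤ f a * ∏ i ∈ s, f i + 1 := by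
      nlinarith [Nat.one_le_iff_ne_zero.mp hfa, Nat.one_le_iff_ne_zero.mp hprod]
    omega

lemma nat_prod_amgm {ι : Type*} (s : Finset ι) (f : ι → ℕ) (hs : s.Nonempty) :
    (∏ i ∈ s, (f i : ℝ)) ≤ ((∑ i ∈ s, (f i : ℝ)) / s.card) ^ s.card := by
  classical
  set k : ℕ := s.card with hk
  have hk0 : 0 < k := Finset.card_pos.mpr hs
  have hkR : (0:ℝ) < k := by exact_mod_cast hk0
  set w : ι → ℝ := fun _ => (k : ℝ)⁻¹ with hw
  have h1 : ∀ i ∈ s, (0:ℝ) ≤ w i := fun i _ => by positivity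
  have h2 : ∑ i ∈ s, w i = 1 := by
    rw [hw, Finset.sum_const, ← hk, nsmul_eq_mul]
    field_simp
  have h3 : ∀ i ∈ s, (0:ℝ) ≤ (f i : ℝ) := fun i _ => Nat.cast_nonneg _
  have hgm := Real.geom_mean_le_arith_mean_weighted s w (fun i => (f i : ℝ)) h1 h2 h3
  have hrw : ∑ i ∈ s, w i * (f i : ℝ) = (∑ i ∈ s, (f i : ℝ)) / k := by
    rw [Finset.sum_congr rfl (fun i _ => by rw [hw]),
      ← Finset.mul_sum]
    field_simp
  rw [hrw] at hgm
  have hL : (∏ i ∈ s, (f i : ℝ) ^ (w i)) ^ k = ∏ i ∈ s, (f i : ℝ) := by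
    rw [← Finset.prod_pow]
    apply Finset.prod_congr rfl
    intro i hi
    rw [hw, ← Real.rpow_natCast ((f i : ℝ) ^ ((k:ℝ))⁻¹) k, ← Real.rpow_mul (h3 i hi),
      inv_mul_cancel₀ (ne_of_gt hkR), Real.rpow_one]
  have hLnn : (0:ℝ) ≤ ∏ i ∈ s, (f i : ℝ) ^ (w i) :=
    Finset.prod_nonneg (fun i hi => Real.rpow_nonneg (h3 i hi) _)
  calc (∏ i ∈ s, (f i : ℝ)) = (∏ i ∈ s, (f i : ℝ) ^ (w i)) ^ k := hL.symm
    _ ≤ ((∑ i ∈ s, (f i : ℝ)) / k) ^ k := pow_le_pow_left₀ hLnn hgm k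

end Numeric

/-- Proposition 2 of the paper.  For a rooted *binary*
ultrametric phylogenetic tree on `n` leaves and a branching value `k`,
`n − k + 1 ≤ m(T,k) ≤ (n/k)^k`. -/
theorem m_bounds_at_branching_value
    {V : Type} [Fintype V] [DecidableEq V] (T : PhyloTree V)
    (hU : T.Ultrametric) (hB : T.Binary) (n k : ℕ)
    (hn : n = T.leaves.ncard) (hk : 1 ≤ k) (hbv : T.IsBranchingValue k) :
    n - k + 1 ≤ T.m k ∧ (T.m k : ℝ) ≤ ((n : ℝ) / (k : ℝ)) ^ k := by
  classical
  obtain ⟨d, hd, hcc⟩ := hbv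
  obtain ⟨x0, hx0, -⟩ := T.exists_leaf_desc T.root
  set H := T.hgt x0 with hHdef
  have hH : ∀ x, T.IsLeaf x → T.hgt x = H := fun x hx => hU x x0 hx hx0
  have hkc : {t | T.istop d t}.ncard = k := by
    rw [← T.ccount_eq_tops hH hd]; exact hcc
  set topsF := (Set.toFinite {t | T.istop d t}).toFinset with htopsF
  have hcardF : topsF.card = k := by
    rw [← hkc]; exact (Set.ncard_eq_toFinset_card _ _).symm
  have hm : T.m k = ∏ t ∈ topsF, {x | T.IsLeaf x ∧ T.anc t x}.ncard := by
    rw [PhyloTree.m, T.maxPD_eq_trav hH hd hk hkc, T.trav_count hH hd]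
  have hsum : ∑ t ∈ topsF, {x | T.IsLeaf x ∧ T.anc t x}.ncard = n := by
    rw [htopsF, T.blocks_sum hH hd, hn]
  have hpos : ∀ t ∈ topsF, 1 ≤ {x | T.IsLeaf x ∧ T.anc t x}.ncard := by
    rw [htopsF]; exact T.blocks_pos hH hd
  constructor
  · have hlow : (∑ t ∈ topsF, {x | T.IsLeaf x ∧ T.anc t x}.ncard) + 1
        ≤ (∏ t ∈ topsF, {x | T.IsLeaf x ∧ T.anc t x}.ncard) + topsF.card :=
      nat_prod_lower topsF (fun t => {x | T.IsLeaf x ∧ T.anc t x}.ncard) hpos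
    have h2 : n + 1 ≤ T.m k + k := by
      rw [hm, ← hsum, ← hcardF]; exact hlow
    have hone : ∀ t ∈ topsF, 1 ≤ 1 := fun _ _ => le_refl 1
    have hnk : k ≤ n := by
      have h3 : ∑ t ∈ topsF, 1 ≤ ∑ t ∈ topsF, {x | T.IsLeaf x ∧ T.anc t x}.ncard :=
        Finset.sum_le_sum hpos
      rw [Finset.sum_const, smul_eq_mul, mul_one, hcardF, hsum] at h3
      exact h3
    omega
  · have hne : topsF.Nonempty := Finset.card_pos.mp (by omega)
    have hA : (∏ t ∈ topsF, ({x | T.IsLeaf x ∧ T.anc t x}.ncard : ℝ))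
        ≤ ((∑ t ∈ topsF, ({x | T.IsLeaf x ∧ T.anc t x}.ncard : ℝ)) / topsF.card) ^ topsF.card :=
      nat_prod_amgm topsF (fun t => {x | T.IsLeaf x ∧ T.anc t x}.ncard) hne
    rw [hcardF] at hA
    have e1 : (∑ t ∈ topsF, ({x | T.IsLeaf x ∧ T.anc t x}.ncard : ℝ)) = (n : ℝ) := by
      rw [← Nat.cast_sum, hsum]
    rw [e1] at hA
    calc (T.m k : ℝ) = ∏ t ∈ topsF, ({x | T.IsLeaf x ∧ T.anc t x}.ncard : ℝ) := by
          rw [hm]; push_cast; rfl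
      _ ≤ ((n : ℝ) / (k : ℝ)) ^ k := hA
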